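/- Let n ≥ 1 and let N be a permutation-invariant norm on ℝ^n. Then there exist n+1 points p_0, p_1, …, p_n in ℝ^n and a real number p > 0 such that N(p_i − p_j) = p for all i ≠ j; that is, the equilateral dimension of (ℝ^n, N) is at least n+1. -/

import Mathlib

/-- `N` is a norm on `ℝ^n`. -/
def IsNorm {n : ℕ} (N : (Fin n → ℝ) → ℝ) : Prop :=
  (∀ x, N x = 0 ↔ x = 0) ∧
  (∀ (c : ℝ) (x : Fin n → ℝ), N (c • x) = |c| * N x) ∧
  (∀ x y : Fin n → ℝ, N (x + y) ≤ N x + N y)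

/-- `N` is permutation-invariant. -/
def PermInvariant {n : ℕ} (N : (Fin n → ℝ) → ℝ) : Prop :=
  ∀ (σ : Equiv.Perm (Fin n)) (x : Fin n → ℝ), N (fun i => x (σ i)) = N x

/-- standard basis vector -/
def ee {n : ℕ} (i : Fin n) : Fin n → ℝ := fun j => if j = i then 1 else 0

lemma exists_perm_two {n : ℕ} {i j a b : Fin n} (hij : i ≠ j) (hab : a ≠ b) :
    ∃ π : Equiv.Perm (Fin n), π i = a ∧ π j = b := by
  set s := Equiv.swap i a with hs
  refine ⟨s.trans (Equiv.swap (s j) b), ?_, ?_⟩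
  · have h1 : s i = a := Equiv.swap_apply_left i a
    have h2 : s j ≠ a := by
      rw [← h1]
      intro h
      exact hij (s.injective h).symm
    simp only [Equiv.trans_apply, h1]
    exact Equiv.swap_apply_of_ne_of_ne (Ne.symm h2) hab
  · simp only [Equiv.trans_apply]
    exact Equiv.swap_apply_left _ _

theorem equilateral_dimension_of_permInvariant (n : ℕ) (hn : 1 ≤ n)
    (N : (Fin n → ℝ) → ℝ) (hN : IsNorm N) (hperm : PermInvariant N) :
    ∃ (p : Fin (n + 1) → (Fin n → ℝ)) (d : ℝ), 0 < d ∧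
      ∀ i j : Fin (n + 1), i ≠ j → N (p i - p j) = d := by
  obtain ⟨hzero, hsmul, htri⟩ := hN
  have hN0 : N 0 = 0 := (hzero 0).mpr rfl
  have hneg : ∀ x, N (-x) = N x := by
    intro x
    have h := hsmul (-1) x
    simpa using h
  have hnonneg : ∀ x, 0 ≤ N x := by
    intro x
    have h := htri x (-x)
    rw [add_neg_cancel, hN0, hneg] at h
    linarith
  -- constant-one vector
  set one : Fin n → ℝ := fun _ => 1 with hone
  have hone_ne : one ≠ 0 := by
    intro h
    have := congrFun h ⟨0, by omega⟩
    simp [hone] at this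
  have hone_pos : 0 < N one :=
    lt_of_le_of_ne (hnonneg one) fun h => hone_ne ((hzero one).mp h.symm)
  rcases eq_or_lt_of_le hn with h1 | h2
  · -- case n = 1
    have hn1 : n = 1 := h1.symm
    subst hn1
    refine ⟨fun i => ((i : ℕ) : ℝ) • one, N one, hone_pos, ?_⟩
    intro i j hij
    have hval : (((i : ℕ) : ℝ) • one) - (((j : ℕ) : ℝ) • one)
        = (((i:ℕ):ℝ) - ((j:ℕ):ℝ)) • one := by
      rw [sub_smul]
    rw [hval, hsmul]
    have : |((i:ℕ):ℝ) - ((j:ℕ):ℝ)| = 1 := by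
      fin_cases i <;> fin_cases j <;> simp_all
    rw [this, one_mul]
  · -- case n ≥ 2
    have hz : (0 : ℕ) < n := by omega
    set z : Fin n := ⟨0, hz⟩ with hzdef
    set o : Fin n := ⟨1, h2⟩ with hodef
    have hzo : z ≠ o := by simp [hzdef, hodef, Fin.ext_iff]
    set d := N (ee z - ee o) with hd
    -- permutation invariance for basis differences
    have permA : ∀ a b : Fin n, a ≠ b → N (ee a - ee b) = d := by
      intro a b hab
      obtain ⟨π, hπ1, hπ2⟩ := exists_perm_two hzo hab
      have h := hperm π (ee a - ee b)
      rw [← h, hd]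
      congr 1
      funext k
      simp only [Pi.sub_apply, ee, ← hπ1, ← hπ2, EmbeddingLike.apply_eq_iff_eq]
    have hdpos : 0 < d := by
      refine lt_of_le_of_ne (hnonneg _) fun h => ?_
      have h0 : ee z - ee o = 0 := (hzero _).mp h.symm
      have := congrFun h0 z
      simp [ee, hzo] at this
    -- permutation invariance towards the diagonal
    have permB : ∀ (t : ℝ) (a : Fin n), N (ee a - t • one) = N (ee z - t • one) := by
      intro t a
      have h := hperm (Equiv.swap z a) (ee a - t • one)
      rw [← h]
      congr 1
      funext k
      have : (Equiv.swap z a) k = a ↔ k = z := by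
        rw [Equiv.apply_eq_iff_eq_symm_apply, Equiv.symm_swap, Equiv.swap_apply_right]
      simp only [Pi.sub_apply, ee, Pi.smul_apply, hone, smul_eq_mul, mul_one, this]
    -- triangle inequality for sums
    have hsum : ∀ (f : Fin n → (Fin n → ℝ)),
        N (∑ k, f k) ≤ ∑ k, N (f k) := by
      intro f
      classical
      refine Finset.le_sum_of_subadditive N hN0.le ?_ _ _
      exact htri
    -- the key sum identity
    have hkey : (∑ k, (ee z - ee k)) = (n : ℝ) • ee z - one := by
      funext j
      simp only [Finset.sum_apply, Pi.sub_apply, Pi.smul_apply, smul_eq_mul, hone]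
      rw [Finset.sum_sub_distrib]
      congr 1
      · simp [Finset.card_univ]
      · simp [ee]
    have hsumval : (∑ k, N (ee z - ee k)) = ((n : ℝ) - 1) * d := by
      rw [← Finset.sum_erase_add _ _ (Finset.mem_univ z)]
      have h1 : ∀ k ∈ Finset.univ.erase z, N (ee z - ee k) = d := by
        intro k hk
        exact permA z k (Ne.symm (Finset.ne_of_mem_erase hk))
      rw [Finset.sum_congr rfl h1, Finset.sum_const, Finset.card_erase_of_mem (Finset.mem_univ z)]
      simp only [sub_self, hN0, add_zero, Finset.card_univ, Fintype.card_fin, smul_eq_mul]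
      rw [nsmul_eq_mul, Nat.cast_sub hn, Nat.cast_one]
    -- g(1/n) ≤ d
    set g : ℝ → ℝ := fun t => N (ee z - t • one) with hg
    have hga : g (1 / n) ≤ d := by
      have hb : N ((n : ℝ) • ee z - one) ≤ ((n : ℝ) - 1) * d := by
        rw [← hkey, ← hsumval]; exact hsum _
      have hsc : (n : ℝ) • (ee z - (1 / n : ℝ) • one) = (n : ℝ) • ee z - one := by
        rw [smul_sub, smul_smul]
        congr 1
        rw [mul_one_div, div_self (by positivity), one_smul]
      have := hsmul (n : ℝ) (ee z - (1 / n : ℝ) • one)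
      rw [hsc] at this
      have hnpos : (0 : ℝ) < n := by positivity
      have habs : |(n : ℝ)| = n := abs_of_pos hnpos
      rw [habs] at this
      have : (n : ℝ) * g (1 / n) ≤ ((n : ℝ) - 1) * d := by
        rw [hg]; dsimp only; rw [← this]; exact hb
      nlinarith [hdpos]
    -- g is Lipschitz
    have glip : Continuous g := by
      have key : ∀ u v : ℝ, g u - g v ≤ N one * |u - v| := by
        intro u v
        have h := htri (ee z - v • one) ((v - u) • one)
        have heq : (ee z - v • one) + (v - u) • one = ee z - u • one := by
          funext j; simp; ring
        rw [heq, hsmul] at h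
        have : g u ≤ g v + |v - u| * N one := by rw [hg]; dsimp only; linarith
        rw [abs_sub_comm] at this
        linarith [this]
      apply LipschitzWith.continuous (K := Real.toNNReal (N one)) (f := g)
      apply LipschitzWith.of_dist_le_mul
      intro t s
      rw [Real.dist_eq, Real.dist_eq, Real.coe_toNNReal _ (hnonneg one)]
      rw [abs_sub_le_iff]
      constructor
      · have := key t s; linarith
      · have := key s t; rw [abs_sub_comm] at this; linarith
    -- g(T) ≥ d for large T
    set T : ℝ := max (1 / n) ((d + N (ee z)) / N one) with hT
    have hgb : d ≤ g T := by
      have hT2 : (d + N (ee z)) / N one ≤ T := le_max_right _ _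
      have hTmul : d + N (ee z) ≤ T * N one := by
        rw [div_le_iff₀ hone_pos] at hT2; linarith
      have hT0 : 0 ≤ T := le_trans (by positivity) (le_max_left _ _)
      have h := htri (T • one - ee z) (ee z)
      have heq : (T • one - ee z) + ee z = T • one := by abel
      rw [heq, hsmul, abs_of_nonneg hT0] at h
      have hflip : N (T • one - ee z) = g T := by
        rw [hg]; dsimp only
        rw [← hneg (ee z - T • one)]; congr 1; abel
      rw [hflip] at h
      linarith
    -- IVT
    have hmem : d ∈ g '' Set.Icc (1 / n) T :=
      intermediate_value_Icc (le_max_left _ _) glip.continuousOn ⟨hga, hgb⟩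
    obtain ⟨t, _, hgt⟩ := hmem
    -- conclusion
    refine ⟨Fin.cons (t • one) ee, d, hdpos, ?_⟩
    intro i j hij
    induction i using Fin.cases with
    | zero =>
      induction j using Fin.cases with
      | zero => exact absurd rfl hij
      | succ b =>
        rw [Fin.cons_zero, Fin.cons_succ]
        rw [show t • one - ee b = -(ee b - t • one) by abel, hneg, permB]
        exact hgt
    | succ a =>
      induction j using Fin.cases with
      | zero =>
        rw [Fin.cons_zero, Fin.cons_succ]
        rw [permB]
        exact hgt
      | succ b =>
        rw [Fin.cons_succ, Fin.cons_succ]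
        have hab : a ≠ b := fun h => hij (by rw [h])
        exact permA a b hab
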